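/- Let ς:H⊗H→A be a k-linear map such that ρ and ς satisfy conditions (2), (4), (11) and (17)–(22). Then for every k ∈ H^L ∪ H^R, every h ∈ H and every a ∈ A one has k·(h·a) = kh·a. -/
import Mathlib


open scoped TensorProduct

/-- The data of a weak bialgebra structure (together with an antipode and its
inverse) on a `k`-algebra `H`: a comultiplication `Δ`, a counit `ε`, an
antipode `S` and its inverse `Sinv`. -/
structure WeakHopfData (k H : Type*) [Field k] [Ring H] [Algebra k H] where
  Δ : H →ₗ[k] H ⊗[k] H
  ε : H →ₗ[k] k
  S : H →ₗ[k] H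
  Sinv : H →ₗ[k] H

section

variable {k H A : Type*} [Field k] [Ring H] [Algebra k H] [Ring A] [Algebra k A]

/-- `Π^L(h) = ε(1⁽¹⁾h)1⁽²⁾`. -/
noncomputable def piL (W : WeakHopfData k H) (h : H) : H :=
  (TensorProduct.lid k H) ((LinearMap.rTensor H (W.ε ∘ₗ LinearMap.mulRight k h)) (W.Δ 1))

/-- `Π^R(h) = 1⁽¹⁾ε(h1⁽²⁾)`. -/
noncomputable def piR (W : WeakHopfData k H) (h : H) : H :=
  (TensorProduct.rid k H) ((LinearMap.lTensor H (W.ε ∘ₗ LinearMap.mulLeft k h)) (W.Δ 1))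

/-- `H^L = im(Π^L)`. -/
def HL (W : WeakHopfData k H) : Set H := Set.range (piL W)

/-- `H^R = im(Π^R)`. -/
def HR (W : WeakHopfData k H) : Set H := Set.range (piR W)

/-- The axioms of a weak Hopf algebra with bijective antipode, where Sweedler
sums are expressed via arbitrary finite representations of the comultiplication. -/
structure IsWeakHopf (W : WeakHopfData k H) : Prop where
  coassoc : ∀ h : H,
    (TensorProduct.assoc k H H H) ((LinearMap.rTensor H W.Δ) (W.Δ h)) =
      (LinearMap.lTensor H W.Δ) (W.Δ h)
  counit_left : ∀ h : H, (TensorProduct.lid k H) ((LinearMap.rTensor H W.ε) (W.Δ h)) = h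
  counit_right : ∀ h : H, (TensorProduct.rid k H) ((LinearMap.lTensor H W.ε) (W.Δ h)) = h
  comul_mul : ∀ h l : H, W.Δ (h * l) = W.Δ h * W.Δ l
  weak_comul_one₁ : (LinearMap.lTensor H W.Δ) (W.Δ 1) =
    (TensorProduct.assoc k H H H) (W.Δ 1 ⊗ₜ[k] (1 : H)) * ((1 : H) ⊗ₜ[k] W.Δ 1)
  weak_comul_one₂ : (LinearMap.lTensor H W.Δ) (W.Δ 1) =
    ((1 : H) ⊗ₜ[k] W.Δ 1) * (TensorProduct.assoc k H H H) (W.Δ 1 ⊗ₜ[k] (1 : H))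
  weak_counit : ∀ h l m : H, ∀ (n : ℕ) (x y : Fin n → H),
    W.Δ l = ∑ i, x i ⊗ₜ[k] y i →
      W.ε (h * l * m) = ∑ i, W.ε (h * x i) * W.ε (y i * m) ∧
      W.ε (h * l * m) = ∑ i, W.ε (h * y i) * W.ε (x i * m)
  antipode_left : ∀ h : H, ∀ (n : ℕ) (x y : Fin n → H),
    W.Δ h = ∑ i, x i ⊗ₜ[k] y i → ∑ i, x i * W.S (y i) = piL W h
  antipode_right : ∀ h : H, ∀ (n : ℕ) (x y : Fin n → H),
    W.Δ h = ∑ i, x i ⊗ₜ[k] y i → ∑ i, W.S (x i) * y i = piR W h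
  antipode_mid : ∀ h : H, ∀ (n : ℕ) (x y : Fin n → H),
    W.Δ h = ∑ i, x i ⊗ₜ[k] y i →
      ∀ (m : Fin n → ℕ) (u v : (i : Fin n) → Fin (m i) → H),
        (∀ i, W.Δ (y i) = ∑ j, u i j ⊗ₜ[k] v i j) →
          ∑ i, ∑ j, W.S (x i) * u i j * W.S (v i j) = W.S h
  S_Sinv : ∀ h : H, W.S (W.Sinv h) = h
  Sinv_S : ∀ h : H, W.Sinv (W.S h) = h

/-- Condition (1): `h·1_A = Π^L(h)·1_A`. -/
def cond1 (W : WeakHopfData k H) (ρ : H →ₗ[k] A →ₗ[k] A) : Prop :=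
  ∀ h : H, ρ h 1 = ρ (piL W h) 1

/-- Condition (2): `h·(aa') = (h⁽¹⁾·a)(h⁽²⁾·a')`. -/
def cond2 (W : WeakHopfData k H) (ρ : H →ₗ[k] A →ₗ[k] A) : Prop :=
  ∀ (h : H) (a a' : A) (n : ℕ) (x y : Fin n → H),
    W.Δ h = ∑ i, x i ⊗ₜ[k] y i → ρ h (a * a') = ∑ i, ρ (x i) a * ρ (y i) a'

/-- Condition (3): `S⁻¹(l)h·a = (h·a)(l·1_A)` and `lh·a = (l·1_A)(h·a)` for `l ∈ H^L`. -/
def cond3 (W : WeakHopfData k H) (ρ : H →ₗ[k] A →ₗ[k] A) : Prop :=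
  ∀ (h : H) (a : A), ∀ l ∈ HL W,
    ρ (W.Sinv l * h) a = ρ h a * ρ l 1 ∧ ρ (l * h) a = ρ l 1 * ρ h a

/-- Condition (4): `1·a = a`. -/
def cond4 (ρ : H →ₗ[k] A →ₗ[k] A) : Prop := ∀ a : A, ρ 1 a = a

/-- Condition (5). -/
def cond5 (W : WeakHopfData k H) (ρ : H →ₗ[k] A →ₗ[k] A) (σ : H → H → A) : Prop :=
  ∀ (h g : H), ∀ l ∈ HL W,
    σ (l * h) g = ρ l 1 * σ h g ∧ σ (W.Sinv l * h) g = σ h g * ρ l 1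

/-- Condition (6): `(h⁽¹⁾·(l·1_A))σ(h⁽²⁾,k) = σ(h,lk)` for `l ∈ H^L`. -/
def cond6 (W : WeakHopfData k H) (ρ : H →ₗ[k] A →ₗ[k] A) (σ : H → H → A) : Prop :=
  ∀ (h g : H), ∀ l ∈ HL W, ∀ (n : ℕ) (x y : Fin n → H),
    W.Δ h = ∑ i, x i ⊗ₜ[k] y i →
      ∑ i, ρ (x i) (ρ l 1) * σ (y i) g = σ h (l * g)

/-- Condition (7): `σ(1,h) = σ(h,1) = h·1_A`. -/
def cond7 (ρ : H →ₗ[k] A →ₗ[k] A) (σ : H → H → A) : Prop :=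
  ∀ h : H, σ 1 h = ρ h 1 ∧ σ h 1 = ρ h 1

/-- Condition (8), the cocycle condition. -/
def cond8 (W : WeakHopfData k H) (ρ : H →ₗ[k] A →ₗ[k] A) (σ : H → H → A) : Prop :=
  ∀ (h g m : H) (n₁ : ℕ) (x₁ y₁ : Fin n₁ → H) (n₂ : ℕ) (x₂ y₂ : Fin n₂ → H)
    (n₃ : ℕ) (x₃ y₃ : Fin n₃ → H),
    W.Δ h = ∑ i, x₁ i ⊗ₜ[k] y₁ i → W.Δ g = ∑ i, x₂ i ⊗ₜ[k] y₂ i →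
    W.Δ m = ∑ i, x₃ i ⊗ₜ[k] y₃ i →
      ∑ i, ∑ j, ∑ p, ρ (x₁ i) (σ (x₂ j) (x₃ p)) * σ (y₁ i) (y₂ j * y₃ p) =
        ∑ i, ∑ j, σ (x₁ i) (x₂ j) * σ (y₁ i * y₂ j) m

/-- Condition (9), the twisted module condition. -/
def cond9 (W : WeakHopfData k H) (ρ : H →ₗ[k] A →ₗ[k] A) (σ : H → H → A) : Prop :=
  ∀ (h g : H) (a : A) (n : ℕ) (x y : Fin n → H) (m : ℕ) (u v : Fin m → H),
    W.Δ h = ∑ i, x i ⊗ₜ[k] y i → W.Δ g = ∑ j, u j ⊗ₜ[k] v j →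
      ∑ i, ∑ j, ρ (x i) (ρ (u j) a) * σ (y i) (v j) =
        ∑ i, ∑ j, σ (x i) (u j) * ρ (y i * v j) a

/-- Condition (10): `h·(l·1_A) = hl·1_A` for `l ∈ H^L`. -/
def cond10 (W : WeakHopfData k H) (ρ : H →ₗ[k] A →ₗ[k] A) : Prop :=
  ∀ h : H, ∀ l ∈ HL W, ρ h (ρ l 1) = ρ (h * l) 1

/-- Condition (11): `h·(l·1_A) = hl·1_A` for all `h, l ∈ H`. -/
def cond11 (ρ : H →ₗ[k] A →ₗ[k] A) : Prop :=
  ∀ h l : H, ρ h (ρ l 1) = ρ (h * l) 1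

/-- Condition (12): `σ(h,l) = σ(hl,1)` for `l ∈ H^L`. -/
def cond12 (W : WeakHopfData k H) (σ : H → H → A) : Prop :=
  ∀ h : H, ∀ l ∈ HL W, σ h l = σ (h * l) 1

/-- Condition (13). -/
def cond13 (W : WeakHopfData k H) (ρ : H →ₗ[k] A →ₗ[k] A) (σbar : H → H → A) : Prop :=
  ∀ (h g : H) (n : ℕ) (x y : Fin n → H) (m : ℕ) (u v : Fin m → H),
    W.Δ h = ∑ i, x i ⊗ₜ[k] y i → W.Δ g = ∑ j, u j ⊗ₜ[k] v j →
      σbar h g = ∑ i, ∑ j, ρ (x i * u j) 1 * σbar (y i) (v j)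

/-- Condition (14). -/
def cond14 (W : WeakHopfData k H) (ρ : H →ₗ[k] A →ₗ[k] A) (σbar : H → H → A) : Prop :=
  ∀ (h g : H), ∀ l ∈ HL W,
    σbar (l * h) g = ρ l 1 * σbar h g ∧ σbar (W.Sinv l * h) g = σbar h g * ρ l 1

/-- Condition (15). -/
def cond15 (W : WeakHopfData k H) (ρ : H →ₗ[k] A →ₗ[k] A) (σbar : H → H → A) : Prop :=
  ∀ (h g : H), ∀ l ∈ HL W, ∀ (n : ℕ) (x y : Fin n → H),
    W.Δ h = ∑ i, x i ⊗ₜ[k] y i →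
      ∑ i, σbar (x i) g * ρ (y i) (ρ l 1) = σbar h (W.Sinv l * g)

/-- Condition (16). -/
def cond16 (W : WeakHopfData k H) (ρ : H →ₗ[k] A →ₗ[k] A) (σ σbar : H → H → A) : Prop :=
  ∀ (h g : H) (n : ℕ) (x y : Fin n → H) (m : ℕ) (u v : Fin m → H),
    W.Δ h = ∑ i, x i ⊗ₜ[k] y i → W.Δ g = ∑ j, u j ⊗ₜ[k] v j →
      (∑ i, ∑ j, σ (x i) (u j) * σbar (y i) (v j) = ρ h (ρ g 1)) ∧
      (∑ i, ∑ j, σbar (x i) (u j) * σ (y i) (v j) = ρ (h * g) 1)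

/-- Condition (17), the cocycle condition for `ς : H ⊗ H → A`. -/
def cond17 (W : WeakHopfData k H) (ρ : H →ₗ[k] A →ₗ[k] A) (ς : H ⊗[k] H → A) : Prop :=
  ∀ (h g m : H) (n₁ : ℕ) (x₁ y₁ : Fin n₁ → H) (n₂ : ℕ) (x₂ y₂ : Fin n₂ → H)
    (n₃ : ℕ) (x₃ y₃ : Fin n₃ → H),
    W.Δ h = ∑ i, x₁ i ⊗ₜ[k] y₁ i → W.Δ g = ∑ i, x₂ i ⊗ₜ[k] y₂ i →
    W.Δ m = ∑ i, x₃ i ⊗ₜ[k] y₃ i →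
      ∑ i, ∑ j, ∑ p, ρ (x₁ i) (ς (x₂ j ⊗ₜ[k] x₃ p)) * ς (y₁ i ⊗ₜ[k] (y₂ j * y₃ p)) =
        ∑ i, ∑ j, ς (x₁ i ⊗ₜ[k] x₂ j) * ς ((y₁ i * y₂ j) ⊗ₜ[k] m)

/-- Condition (18), the twisted module condition for `ς : H ⊗ H → A`. -/
def cond18 (W : WeakHopfData k H) (ρ : H →ₗ[k] A →ₗ[k] A) (ς : H ⊗[k] H → A) : Prop :=
  ∀ (h g : H) (a : A) (n : ℕ) (x y : Fin n → H) (m : ℕ) (u v : Fin m → H),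
    W.Δ h = ∑ i, x i ⊗ₜ[k] y i → W.Δ g = ∑ j, u j ⊗ₜ[k] v j →
      ∑ i, ∑ j, ρ (x i) (ρ (u j) a) * ς (y i ⊗ₜ[k] v j) =
        ∑ i, ∑ j, ς (x i ⊗ₜ[k] u j) * ρ (y i * v j) a

/-- Condition (19). -/
def cond19 (W : WeakHopfData k H) (ρ : H →ₗ[k] A →ₗ[k] A) (ς : H ⊗[k] H → A) : Prop :=
  ∀ (h g : H) (n : ℕ) (x y : Fin n → H) (m : ℕ) (u v : Fin m → H),
    W.Δ h = ∑ i, x i ⊗ₜ[k] y i → W.Δ g = ∑ j, u j ⊗ₜ[k] v j →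
      ς (h ⊗ₜ[k] g) = ∑ i, ∑ j, ς (x i ⊗ₜ[k] u j) * ρ (y i * v j) 1

/-- Condition (20). -/
def cond20 (W : WeakHopfData k H) (ρ : H →ₗ[k] A →ₗ[k] A) (ς : H ⊗[k] H → A) : Prop :=
  ∀ (h : H) (n : ℕ) (x y : Fin n → H) (m : ℕ) (u v : Fin m → H),
    W.Δ h = ∑ i, x i ⊗ₜ[k] y i → W.Δ 1 = ∑ j, u j ⊗ₜ[k] v j →
      ρ h 1 = ∑ i, ∑ j, ρ (x i) (ρ (u j) 1) * ς (y i ⊗ₜ[k] v j)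

/-- Condition (21). -/
def cond21 (W : WeakHopfData k H) (ρ : H →ₗ[k] A →ₗ[k] A) (ς : H ⊗[k] H → A) : Prop :=
  ∀ (h : H) (m : ℕ) (u v : Fin m → H),
    W.Δ 1 = ∑ j, u j ⊗ₜ[k] v j →
      ρ h 1 = ∑ j, ρ (u j) 1 * ς (v j ⊗ₜ[k] h)

/-- Condition (22): `a(1⁽¹⁾·1_A) ⊗ 1⁽²⁾ = (1⁽¹⁾·a) ⊗ 1⁽²⁾` in `A ⊗ H`. -/
def cond22 (W : WeakHopfData k H) (ρ : H →ₗ[k] A →ₗ[k] A) : Prop :=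
  ∀ (a : A) (m : ℕ) (u v : Fin m → H),
    W.Δ 1 = ∑ j, u j ⊗ₜ[k] v j →
      (∑ j, (a * ρ (u j) 1) ⊗ₜ[k] v j) = ∑ j, (ρ (u j) a) ⊗ₜ[k] v j

/-- Condition (23). -/
def cond23 (W : WeakHopfData k H) (ρ : H →ₗ[k] A →ₗ[k] A) (ςbar : H ⊗[k] H → A) : Prop :=
  ∀ (h g : H) (n : ℕ) (x y : Fin n → H) (m : ℕ) (u v : Fin m → H),
    W.Δ h = ∑ i, x i ⊗ₜ[k] y i → W.Δ g = ∑ j, u j ⊗ₜ[k] v j →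
      ςbar (h ⊗ₜ[k] g) = ∑ i, ∑ j, ρ (x i * u j) 1 * ςbar (y i ⊗ₜ[k] v j)

/-- Condition (24). -/
def cond24 (W : WeakHopfData k H) (ρ : H →ₗ[k] A →ₗ[k] A) (ς ςbar : H ⊗[k] H → A) : Prop :=
  ∀ (h g : H) (n : ℕ) (x y : Fin n → H) (m : ℕ) (u v : Fin m → H),
    W.Δ h = ∑ i, x i ⊗ₜ[k] y i → W.Δ g = ∑ j, u j ⊗ₜ[k] v j →
      (∑ i, ∑ j, ς (x i ⊗ₜ[k] u j) * ςbar (y i ⊗ₜ[k] v j) = ρ (h * g) 1) ∧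
      (∑ i, ∑ j, ςbar (x i ⊗ₜ[k] u j) * ς (y i ⊗ₜ[k] v j) = ρ (h * g) 1)

/-- `σ` is `H^R`-balanced: `σ(hr,k) = σ(h,rk)` for `r ∈ H^R`. -/
def HRBalanced (W : WeakHopfData k H) (σ : H → H → A) : Prop :=
  ∀ (h g : H), ∀ r ∈ HR W, σ (h * r) g = σ h (r * g)

/-- `σbar` is `H^L`-balanced: `σbar(hl,k) = σbar(h,lk)` for `l ∈ H^L`. -/
def HLBalanced (W : WeakHopfData k H) (σbar : H → H → A) : Prop :=
  ∀ (h g : H), ∀ l ∈ HL W, σbar (h * l) g = σbar h (l * g)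

/-- The idempotent `∇ρ : A ⊗ H → A ⊗ H`, `a ⊗ h ↦ a(h⁽¹⁾·1_A) ⊗ h⁽²⁾`. -/
noncomputable def nabla (W : WeakHopfData k H) (ρ : H →ₗ[k] A →ₗ[k] A) :
    A ⊗[k] H →ₗ[k] A ⊗[k] H :=
  (LinearMap.rTensor H (LinearMap.mul' k A ∘ₗ LinearMap.lTensor A (ρ.flip 1))) ∘ₗ
    (TensorProduct.assoc k A H H).symm.toLinearMap ∘ₗ LinearMap.lTensor A W.Δ

/-- The subspace `N` of `A ⊗ H` spanned by the elements
`a(l·1_A) ⊗ h - a ⊗ lh` with `l ∈ H^L`, so that `(A ⊗ H)/N = A ⊗_{H^L} H`. -/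
def relN (W : WeakHopfData k H) (ρ : H →ₗ[k] A →ₗ[k] A) : Submodule k (A ⊗[k] H) :=
  Submodule.span k
    {z | ∃ (a : A) (l h : H), l ∈ HL W ∧ z = (a * ρ l 1) ⊗ₜ[k] h - a ⊗ₜ[k] (l * h)}

/-- The map `σ̃(h,k) := (h⁽¹⁾k⁽¹⁾·1_A)σ̄(h⁽²⁾,k⁽²⁾)`. -/
noncomputable def sigmaTilde (W : WeakHopfData k H) (ρ : H →ₗ[k] A →ₗ[k] A)
    (σbar : H →ₗ[k] H →ₗ[k] A) : H → H → A := fun h g =>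
  LinearMap.mul' k A
    ((TensorProduct.map ((ρ.flip 1) ∘ₗ LinearMap.mul' k H) (TensorProduct.lift σbar))
      ((TensorProduct.tensorTensorTensorComm k H H H H) (W.Δ h ⊗ₜ[k] W.Δ g)))

end


section AuxStatement9

set_option synthInstance.maxHeartbeats 1000000
set_option maxHeartbeats 1000000

private lemma exists_rep9 {k M N : Type*} [Field k] [AddCommGroup M] [Module k M]
    [AddCommGroup N] [Module k N] (t : M ⊗[k] N) :
    ∃ (n : ℕ) (x : Fin n → M) (y : Fin n → N), t = ∑ i, x i ⊗ₜ[k] y i := by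
  induction t using TensorProduct.induction_on with
  | zero => exact ⟨0, ![], ![], by simp⟩
  | tmul a b => exact ⟨1, ![a], ![b], by simp⟩
  | add s t hs ht =>
    obtain ⟨n, x, y, rfl⟩ := hs
    obtain ⟨m, u, v, rfl⟩ := ht
    refine ⟨n + m, Fin.append x u, Fin.append y v, ?_⟩
    rw [Fin.sum_univ_add]
    simp

variable {k H : Type*} [Field k] [Ring H] [Algebra k H]

private lemma piL_rep9 (W : WeakHopfData k H) {n : ℕ} {u v : Fin n → H}
    (h1 : W.Δ 1 = ∑ j, u j ⊗ₜ[k] v j) (m : H) :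
    piL W m = ∑ j, W.ε (u j * m) • v j := by
  unfold piL
  rw [h1]
  simp [LinearMap.rTensor, TensorProduct.map_tmul, LinearMap.mulRight_apply,
    TensorProduct.lid_tmul, map_sum]

private lemma piR_rep9 (W : WeakHopfData k H) {n : ℕ} {u v : Fin n → H}
    (h1 : W.Δ 1 = ∑ j, u j ⊗ₜ[k] v j) (m : H) :
    piR W m = ∑ j, W.ε (m * v j) • u j := by
  unfold piR
  rw [h1]
  simp [LinearMap.lTensor, TensorProduct.map_tmul, LinearMap.mulLeft_apply,
    TensorProduct.rid_tmul, map_sum]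

private lemma comul_piL₁9 (W : WeakHopfData k H) (hW : IsWeakHopf W) (m : H) :
    W.Δ (piL W m) = (piL W m ⊗ₜ[k] (1 : H)) * W.Δ 1 := by
  obtain ⟨n, u, v, h1⟩ := exists_rep9 (W.Δ 1)
  set ψ : H ⊗[k] (H ⊗[k] H) →ₗ[k] H ⊗[k] H :=
    (TensorProduct.lid k (H ⊗[k] H)).toLinearMap ∘ₗ
      LinearMap.rTensor (H ⊗[k] H) (W.ε ∘ₗ LinearMap.mulRight k m) with hψ
  have E := congrArg ψ hW.weak_comul_one₁
  rw [h1] at E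
  simp only [map_sum, LinearMap.lTensor_tmul, hψ, LinearMap.coe_comp, Function.comp_apply,
    LinearMap.rTensor_tmul, LinearEquiv.coe_coe, TensorProduct.lid_tmul,
    LinearMap.mulRight_apply, TensorProduct.sum_tmul, TensorProduct.tmul_sum,
    Finset.sum_mul, Finset.mul_sum, TensorProduct.assoc_tmul,
    Algebra.TensorProduct.tmul_mul_tmul, one_mul, mul_one] at E
  rw [piL_rep9 W h1 m, h1]
  simp only [map_sum, map_smul, TensorProduct.sum_tmul, TensorProduct.smul_tmul',
    Finset.sum_mul, smul_mul_assoc, Algebra.TensorProduct.tmul_mul_tmul, one_mul]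
  rw [E, Finset.sum_comm]
  simp only [Finset.mul_sum, TensorProduct.smul_tmul', smul_mul_assoc,
    Algebra.TensorProduct.tmul_mul_tmul, one_mul]

private lemma comul_piL₂9 (W : WeakHopfData k H) (hW : IsWeakHopf W) (m : H) :
    W.Δ (piL W m) = W.Δ 1 * (piL W m ⊗ₜ[k] (1 : H)) := by
  obtain ⟨n, u, v, h1⟩ := exists_rep9 (W.Δ 1)
  set ψ : H ⊗[k] (H ⊗[k] H) →ₗ[k] H ⊗[k] H :=
    (TensorProduct.lid k (H ⊗[k] H)).toLinearMap ∘ₗ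
      LinearMap.rTensor (H ⊗[k] H) (W.ε ∘ₗ LinearMap.mulRight k m) with hψ
  have E := congrArg ψ hW.weak_comul_one₂
  rw [h1] at E
  simp only [map_sum, LinearMap.lTensor_tmul, hψ, LinearMap.coe_comp, Function.comp_apply,
    LinearMap.rTensor_tmul, LinearEquiv.coe_coe, TensorProduct.lid_tmul,
    LinearMap.mulRight_apply, TensorProduct.sum_tmul, TensorProduct.tmul_sum,
    Finset.sum_mul, Finset.mul_sum, TensorProduct.assoc_tmul,
    Algebra.TensorProduct.tmul_mul_tmul, one_mul, mul_one] at E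
  rw [piL_rep9 W h1 m, h1]
  simp only [map_sum, map_smul]
  rw [E]
  simp only [Finset.mul_sum, Finset.sum_mul, TensorProduct.smul_tmul', TensorProduct.tmul_smul,
    mul_smul_comm, smul_mul_assoc, Algebra.TensorProduct.tmul_mul_tmul, one_mul, mul_one]
  rw [Finset.sum_comm]
  simp only [TensorProduct.sum_tmul, TensorProduct.tmul_sum, TensorProduct.smul_tmul',
    TensorProduct.tmul_smul]

private lemma comul_piR9 (W : WeakHopfData k H) (hW : IsWeakHopf W) (m : H) :
    W.Δ (piR W m) = ((1 : H) ⊗ₜ[k] piR W m) * W.Δ 1 := by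
  obtain ⟨n, u, v, h1⟩ := exists_rep9 (W.Δ 1)
  set φ : (H ⊗[k] H) ⊗[k] H →ₗ[k] H ⊗[k] H :=
    (TensorProduct.rid k (H ⊗[k] H)).toLinearMap ∘ₗ
      LinearMap.lTensor (H ⊗[k] H) (W.ε ∘ₗ LinearMap.mulLeft k m) with hφ
  have E0 : (LinearMap.rTensor H W.Δ) (W.Δ 1) = (TensorProduct.assoc k H H H).symm
      ((((1:H) ⊗ₜ[k] W.Δ 1)) * (TensorProduct.assoc k H H H) (W.Δ 1 ⊗ₜ[k] (1:H))) := by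
    rw [← hW.weak_comul_one₂, ← hW.coassoc 1, LinearEquiv.symm_apply_apply]
  have E := congrArg φ E0
  rw [h1] at E
  simp only [map_sum, LinearMap.rTensor_tmul, hφ, LinearMap.coe_comp, Function.comp_apply,
    LinearMap.lTensor_tmul, LinearEquiv.coe_coe, TensorProduct.rid_tmul,
    LinearMap.mulLeft_apply, TensorProduct.sum_tmul, TensorProduct.tmul_sum,
    Finset.sum_mul, Finset.mul_sum, TensorProduct.assoc_tmul, TensorProduct.assoc_symm_tmul,
    Algebra.TensorProduct.tmul_mul_tmul, one_mul, mul_one] at E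
  rw [piR_rep9 W h1 m, h1]
  simp only [map_sum, map_smul]
  rw [E]
  simp only [Finset.mul_sum, Finset.sum_mul, TensorProduct.smul_tmul', TensorProduct.tmul_smul,
    mul_smul_comm, smul_mul_assoc, Algebra.TensorProduct.tmul_mul_tmul, one_mul, mul_one]
  simp only [TensorProduct.sum_tmul, TensorProduct.tmul_sum, TensorProduct.smul_tmul',
    TensorProduct.tmul_smul]

end AuxStatement9
/-- under conditions (2), (4), (11) and (17)–(22), one has
`k·(h·a) = kh·a` for all `k ∈ H^L ∪ H^R`. -/
theorem statement9 {k H A : Type*} [Field k] [Ring H] [Algebra k H] [Ring A] [Algebra k A]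
    (W : WeakHopfData k H) (hW : IsWeakHopf W) (ρ : H →ₗ[k] A →ₗ[k] A)
    (ς : H ⊗[k] H →ₗ[k] A)
    (h2 : cond2 W ρ) (h4 : cond4 ρ) (h11 : cond11 ρ)
    (h17 : cond17 W ρ ⇑ς) (h18 : cond18 W ρ ⇑ς) (h19 : cond19 W ρ ⇑ς)
    (h20 : cond20 W ρ ⇑ς) (h21 : cond21 W ρ ⇑ς) (h22 : cond22 W ρ) :
    ∀ g ∈ HL W ∪ HR W, ∀ (h : H) (a : A), ρ g (ρ h a) = ρ (g * h) a := by

  obtain ⟨n₀, u, v, h1⟩ := exists_rep9 (W.Δ 1)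
  have CL : ∀ (m : H) (b : A), ρ (piL W m) b = ρ (piL W m) 1 * b := by
    intro m b
    have hΔl : W.Δ (piL W m) = ∑ j, (u j * piL W m) ⊗ₜ[k] v j := by
      rw [comul_piL₂9 W hW m, h1]
      simp only [Finset.sum_mul, Algebra.TensorProduct.tmul_mul_tmul, mul_one]
    have e1 : ρ (piL W m) b = ∑ j, ρ (u j * piL W m) 1 * ρ (v j) b := by
      have := h2 (piL W m) 1 b n₀ _ _ hΔl
      rwa [one_mul] at this
    have F := congrArg (LinearMap.mul' k A ∘ₗ LinearMap.lTensor A (ρ.flip b))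
        (h22 (ρ (piL W m) 1) n₀ u v h1)
    simp only [map_sum, LinearMap.coe_comp, Function.comp_apply, LinearMap.lTensor_tmul,
      LinearMap.mul'_apply, LinearMap.flip_apply] at F
    have e2 : ρ 1 b = ∑ j, ρ (u j) 1 * ρ (v j) b := by
      have := h2 1 1 b n₀ u v h1
      rwa [one_mul] at this
    calc ρ (piL W m) b = ∑ j, ρ (u j * piL W m) 1 * ρ (v j) b := e1
      _ = ∑ j, ρ (u j) (ρ (piL W m) 1) * ρ (v j) b :=
          Finset.sum_congr rfl fun j _ => by rw [← h11]
      _ = ∑ j, ρ (piL W m) 1 * ρ (u j) 1 * ρ (v j) b := F.symm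
      _ = ρ (piL W m) 1 * ∑ j, ρ (u j) 1 * ρ (v j) b := by
          rw [Finset.mul_sum]
          exact Finset.sum_congr rfl fun j _ => (mul_assoc _ _ _)
      _ = ρ (piL W m) 1 * b := by rw [← e2, h4]
  have CR : ∀ (m : H) (b : A), ρ (piR W m) b = b * ρ (piR W m) 1 := by
    intro m b
    have G := congrArg ((TensorProduct.rid k A).toLinearMap ∘ₗ
        LinearMap.lTensor A (W.ε ∘ₗ LinearMap.mulLeft k m)) (h22 b n₀ u v h1)
    simp only [map_sum, LinearMap.coe_comp, Function.comp_apply, LinearMap.lTensor_tmul,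
      LinearEquiv.coe_coe, TensorProduct.rid_tmul, LinearMap.mulLeft_apply] at G
    rw [piR_rep9 W h1 m]
    simp only [map_sum, map_smul, LinearMap.sum_apply, LinearMap.smul_apply]
    rw [← G]
    simp only [Finset.mul_sum, mul_smul_comm]
  rintro g hg h a
  obtain ⟨nh, x, y, hh⟩ := exists_rep9 (W.Δ h)
  obtain ⟨m, rfl⟩ | ⟨m, rfl⟩ := hg
  · have hΔ : W.Δ (piL W m * h) = ∑ i, (piL W m * x i) ⊗ₜ[k] y i := by
      rw [hW.comul_mul, comul_piL₁9 W hW m, mul_assoc, ← hW.comul_mul, one_mul, hh]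
      simp only [Finset.mul_sum, Algebra.TensorProduct.tmul_mul_tmul, one_mul]
    have e1 : ρ (piL W m * h) a = ∑ i, ρ (piL W m * x i) 1 * ρ (y i) a := by
      have := h2 (piL W m * h) 1 a nh _ _ hΔ
      rwa [one_mul] at this
    have e2 : ρ h a = ∑ i, ρ (x i) 1 * ρ (y i) a := by
      have := h2 h 1 a nh x y hh
      rwa [one_mul] at this
    rw [CL m (ρ h a), e1, e2, Finset.mul_sum]
    exact Finset.sum_congr rfl fun i _ => by rw [← h11, CL m (ρ (x i) 1), mul_assoc]
  · have hΔ : W.Δ (piR W m * h) = ∑ i, x i ⊗ₜ[k] (piR W m * y i) := by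
      rw [hW.comul_mul, comul_piR9 W hW m, mul_assoc, ← hW.comul_mul, one_mul, hh]
      simp only [Finset.mul_sum, Algebra.TensorProduct.tmul_mul_tmul, one_mul]
    have e1 : ρ (piR W m * h) a = ∑ i, ρ (x i) a * ρ (piR W m * y i) 1 := by
      have := h2 (piR W m * h) a 1 nh _ _ hΔ
      rwa [mul_one] at this
    have e2 : ρ h a = ∑ i, ρ (x i) a * ρ (y i) 1 := by
      have := h2 h a 1 nh x y hh
      rwa [mul_one] at this
    rw [CR m (ρ h a), e1, e2, Finset.sum_mul]
    exact Finset.sum_congr rfl fun i _ => by rw [← h11, CR m (ρ (y i) 1), mul_assoc]
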